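/- Let C ⊆ {0,1}^n be a code, W a subset of the 2n variables {x_1,...,x_n,y_1,...,y_n}, and b(W) = {i : x_i ∈ W and y_i ∈ W}. Let V_W ⊆ {0,1}^{[n]∖b(W)} be the interval of points with value 0 at indices i with x_i ∈ W, y_i ∉ W and value 1 at indices j with y_j ∈ W, x_j ∉ W. Then the monomial prime q_W generated by the variables in W contains the polarized neural ideal P(J_C) if and only if V_W ⊆ C/b(W), where C/b(W) is the code obtained from C by deleting the coordinates in b(W). -/

import Mathlib

open MvPolynomial

/-- The pseudomonomial with data `(σ, τ)`: `∏_{i∈σ} x_i · ∏_{j∈τ} (1 - x_j)`. -/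
noncomputable def psm {n : ℕ} (σ τ : Finset (Fin n)) :
    MvPolynomial (Fin n) (ZMod 2) :=
  (∏ i ∈ σ, X i) * ∏ j ∈ τ, (1 - X j)

/-- The polarization of the pseudomonomial with data `(σ, τ)` in
`S = F₂[x_1,…,x_n,y_1,…,y_n]`, where `x_i = X (Sum.inl i)`, `y_j = X (Sum.inr j)`. -/
noncomputable def polz {n : ℕ} (σ τ : Finset (Fin n)) :
    MvPolynomial (Fin n ⊕ Fin n) (ZMod 2) :=
  (∏ i ∈ σ, X (Sum.inl i)) * ∏ j ∈ τ, X (Sum.inr j)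

/-- A pseudomonomial: a product `∏_{i∈σ} x_i ∏_{j∈τ}(1 - x_j)` with `σ, τ` disjoint. -/
def IsPseudomonomial {n : ℕ} (f : MvPolynomial (Fin n) (ZMod 2)) : Prop :=
  ∃ σ τ : Finset (Fin n), Disjoint σ τ ∧ f = psm σ τ

/-- `f` is a minimal pseudomonomial of `I`. -/
def IsMinimalPseudomonomial {n : ℕ} (I : Ideal (MvPolynomial (Fin n) (ZMod 2)))
    (f : MvPolynomial (Fin n) (ZMod 2)) : Prop :=
  IsPseudomonomial f ∧ f ∈ I ∧
    ∀ g : MvPolynomial (Fin n) (ZMod 2), g ∣ f → ¬ f ∣ g → g ∉ I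

/-- The indicator pseudomonomial of a word `c ∈ {0,1}ⁿ`:
`∏_{c_i = 1} x_i · ∏_{c_j = 0} (1 - x_j)`. -/
noncomputable def indic {n : ℕ} (c : Fin n → ZMod 2) :
    MvPolynomial (Fin n) (ZMod 2) :=
  ∏ i : Fin n, (if c i = 1 then X i else 1 - X i)

/-- The neural ideal of a code `C ⊆ {0,1}ⁿ`. -/
noncomputable def neuralIdeal {n : ℕ} (C : Set (Fin n → ZMod 2)) :
    Ideal (MvPolynomial (Fin n) (ZMod 2)) :=
  Ideal.span {f | ∃ c ∉ C, f = indic c}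

/-- The polarization of the neural ideal: the squarefree monomial ideal generated by
the polarizations of the minimal pseudomonomials of `J_C`. -/
noncomputable def polarNeuralIdeal {n : ℕ} (C : Set (Fin n → ZMod 2)) :
    Ideal (MvPolynomial (Fin n ⊕ Fin n) (ZMod 2)) :=
  Ideal.span {m | ∃ σ τ : Finset (Fin n), Disjoint σ τ ∧
    IsMinimalPseudomonomial (neuralIdeal C) (psm σ τ) ∧ m = polz σ τ}


section Aux
open Finset

lemma zmod2_cases (a : ZMod 2) : a = 0 ∨ a = 1 := by revert a; decide

lemma zmod2_ne_zero {a : ZMod 2} (h : a ≠ 0) : a = 1 := by revert h; revert a; decide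

lemma zmod2_sub_ne_zero {a : ZMod 2} (h : (1 : ZMod 2) - a ≠ 0) : a = 0 := by
  revert h; revert a; decide

lemma eval_psm {n : ℕ} (c : Fin n → ZMod 2) (σ τ : Finset (Fin n)) :
    eval c (psm σ τ) = (∏ i ∈ σ, c i) * ∏ j ∈ τ, (1 - c j) := by
  simp [psm]

lemma eval_psm_eq_one {n : ℕ} {c : Fin n → ZMod 2} {σ τ : Finset (Fin n)}
    (h1 : ∀ i ∈ σ, c i = 1) (h2 : ∀ j ∈ τ, c j = 0) : eval c (psm σ τ) = 1 := by
  rw [eval_psm, Finset.prod_eq_one h1, Finset.prod_eq_one, one_mul]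
  intro j hj; rw [h2 j hj, sub_zero]

lemma eval_psm_ne_zero {n : ℕ} {c : Fin n → ZMod 2} {σ τ : Finset (Fin n)}
    (h : eval c (psm σ τ) ≠ 0) : (∀ i ∈ σ, c i = 1) ∧ ∀ j ∈ τ, c j = 0 := by
  rw [eval_psm] at h
  rcases mul_ne_zero_iff.mp h with ⟨h1, h2⟩
  rw [Finset.prod_ne_zero_iff] at h1 h2
  exact ⟨fun i hi => zmod2_ne_zero (h1 i hi), fun j hj => zmod2_sub_ne_zero (h2 j hj)⟩

lemma eval_indic_ne {n : ℕ} (c c' : Fin n → ZMod 2) (hne : c ≠ c') :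
    eval c (indic c') = 0 := by
  obtain ⟨i, hi⟩ : ∃ i, c i ≠ c' i := by
    by_contra hcon; push_neg at hcon; exact hne (funext hcon)
  unfold indic
  rw [map_prod]
  apply Finset.prod_eq_zero (Finset.mem_univ i)
  have hev : eval c (if c' i = 1 then X i else 1 - X i) =
      (if c' i = 1 then c i else 1 - c i) := by split <;> simp
  rw [hev]
  revert hi
  have key : ∀ a b : ZMod 2, a ≠ b → (if b = 1 then a else 1 - a) = 0 := by decide
  exact key (c i) (c' i)

lemma eval_eq_zero_of_mem_neuralIdeal {n : ℕ} {C : Set (Fin n → ZMod 2)}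
    {f : MvPolynomial (Fin n) (ZMod 2)} (hf : f ∈ neuralIdeal C)
    {c : Fin n → ZMod 2} (hc : c ∈ C) : eval c f = 0 := by
  have hle : neuralIdeal C ≤ RingHom.ker (eval c) := by
    rw [neuralIdeal, Ideal.span_le]
    rintro _ ⟨c', hc', rfl⟩
    have : c ≠ c' := fun h => hc' (h ▸ hc)
    simpa [RingHom.mem_ker] using eval_indic_ne c c' this
  exact hle hf

lemma psm_eq_sum_indic {n : ℕ} {σ τ : Finset (Fin n)} (hd : Disjoint σ τ) :
    psm σ τ = ∑ t ∈ (Finset.univ \ (σ ∪ τ)).powerset,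
      indic (fun i => if i ∈ σ ∪ t then 1 else 0) := by
  classical
  set K := Finset.univ \ (σ ∪ τ) with hK
  have hone : (∑ t ∈ K.powerset, (∏ i ∈ t, X i) * ∏ i ∈ K \ t, (1 - X i)) =
      (1 : MvPolynomial (Fin n) (ZMod 2)) := by
    rw [← Finset.prod_add]
    simp
  have hmain : psm σ τ = ∑ t ∈ K.powerset,
      psm σ τ * ((∏ i ∈ t, X i) * ∏ i ∈ K \ t, (1 - X i)) := by
    rw [← Finset.mul_sum, hone, mul_one]
  rw [hmain]
  apply Finset.sum_congr rfl
  intro t ht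
  rw [Finset.mem_powerset] at ht
  have htσ : Disjoint σ t := by
    refine Finset.disjoint_left.mpr fun a ha hat => ?_
    have := ht hat
    rw [hK, Finset.mem_sdiff] at this
    exact this.2 (Finset.mem_union_left _ ha)
  have htτ : Disjoint τ (K \ t) := by
    refine Finset.disjoint_left.mpr fun a ha hat => ?_
    rw [Finset.mem_sdiff, hK, Finset.mem_sdiff] at hat
    exact hat.1.2 (Finset.mem_union_right _ ha)
  have hcompl : Finset.univ \ (σ ∪ t) = τ ∪ (K \ t) := by
    ext a
    have h1 : a ∈ t → ¬(a ∈ σ ∨ a ∈ τ) := by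
      intro h
      have := ht h
      rw [hK, Finset.mem_sdiff, Finset.mem_union] at this
      exact this.2
    have h2 : a ∈ σ → a ∉ τ := fun h h' => Finset.disjoint_left.mp hd h h'
    simp only [hK, Finset.mem_sdiff, Finset.mem_union, Finset.mem_univ, true_and]
    tauto
  have hindic : indic (fun i => if i ∈ σ ∪ t then (1 : ZMod 2) else 0) =
      (∏ i ∈ σ ∪ t, X i) * ∏ i ∈ Finset.univ \ (σ ∪ t), (1 - X i) := by
    unfold indic
    have hfun : ∀ i ∈ Finset.univ,
        (if (fun i => if i ∈ σ ∪ t then (1 : ZMod 2) else 0) i = 1 then X i else 1 - X i) =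
        (if i ∈ σ ∪ t then (X i : MvPolynomial (Fin n) (ZMod 2)) else 1 - X i) := by
      intro i _
      by_cases h : i ∈ σ ∪ t <;> simp [h]
    rw [Finset.prod_congr rfl hfun, Finset.prod_ite, Finset.filter_not,
      Finset.filter_univ_mem]
  rw [hindic, hcompl, psm, Finset.prod_union htσ, Finset.prod_union htτ]
  ring

lemma psm_mem_neuralIdeal {n : ℕ} {C : Set (Fin n → ZMod 2)} {σ τ : Finset (Fin n)}
    (hd : Disjoint σ τ) (h : ∀ c ∈ C, eval c (psm σ τ) = 0) : psm σ τ ∈ neuralIdeal C := by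
  classical
  rw [psm_eq_sum_indic hd]
  apply Ideal.sum_mem
  intro t ht
  rw [Finset.mem_powerset] at ht
  apply Ideal.subset_span
  refine ⟨fun i => if i ∈ σ ∪ t then 1 else 0, ?_, rfl⟩
  intro hc
  have h0 := h _ hc
  have h1 : eval (fun i => if i ∈ σ ∪ t then (1 : ZMod 2) else 0) (psm σ τ) = 1 := by
    apply eval_psm_eq_one
    · intro i hi; rw [if_pos (Finset.mem_union_left _ hi)]
    · intro j hj
      have hjσ : j ∉ σ := Finset.disjoint_right.mp hd hj
      have hjt : j ∉ t := by
        intro hmem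
        have := ht hmem
        rw [Finset.mem_sdiff] at this
        exact this.2 (Finset.mem_union_right _ hj)
      rw [if_neg (by simp [hjσ, hjt])]
  rw [h0] at h1
  exact zero_ne_one h1

lemma mv_isUnit_eq_one : ∀ {n : ℕ} (p : MvPolynomial (Fin n) (ZMod 2)), IsUnit p → p = 1 := by
  intro n
  induction n with
  | zero =>
    intro p hp
    have e := isEmptyAlgEquiv (ZMod 2) (Fin 0)
    have hu : IsUnit (e p) := hp.map e
    have h1 : e p = 1 := by
      have h0 := hu.ne_zero
      revert h0
      generalize e p = a
      revert a; decide
    have := congrArg e.symm h1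
    simpa using this
  | succ n ih =>
    intro p hp
    have e := finSuccEquiv (ZMod 2) n
    have hu : IsUnit (e p) := hp.map e
    obtain ⟨r, hr, hCr⟩ := Polynomial.isUnit_iff.mp hu
    have hr1 : r = 1 := ih r hr
    have h1 : e p = 1 := by rw [← hCr, hr1, Polynomial.C_1]
    have := congrArg e.symm h1
    simpa using this

lemma mv_prime_X {n : ℕ} (i : Fin n) : Prime (X i : MvPolynomial (Fin n) (ZMod 2)) := by
  classical
  let e := (renameEquiv (ZMod 2) (Equiv.optionSubtypeNe i).symm).trans
      (optionEquivLeft (ZMod 2) {b // b ≠ i})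
  rw [← MulEquiv.prime_iff e.toMulEquiv]
  have h : e.toMulEquiv (X i) = Polynomial.X := by
    show e (X i) = Polynomial.X
    simp [e, renameEquiv_apply, rename_X, Equiv.optionSubtypeNe_symm_self,
      optionEquivLeft_X_none]
  rw [h]
  exact Polynomial.prime_X

lemma mv_prime_one_sub_X {n : ℕ} (i : Fin n) :
    Prime (1 - X i : MvPolynomial (Fin n) (ZMod 2)) := by
  classical
  let e := (renameEquiv (ZMod 2) (Equiv.optionSubtypeNe i).symm).trans
      (optionEquivLeft (ZMod 2) {b // b ≠ i})
  rw [← MulEquiv.prime_iff e.toMulEquiv]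
  have h : e.toMulEquiv (1 - X i) = 1 - Polynomial.X := by
    show e (1 - X i) = 1 - Polynomial.X
    simp only [map_sub, map_one]
    congr 1
    simp [e, renameEquiv_apply, rename_X, Equiv.optionSubtypeNe_symm_self,
      optionEquivLeft_X_none]
  rw [h]
  have hp : Prime (Polynomial.X - Polynomial.C (1 : MvPolynomial {b // b ≠ i} (ZMod 2))) :=
    Polynomial.prime_X_sub_C 1
  have heq : (1 : Polynomial (MvPolynomial {b // b ≠ i} (ZMod 2))) - Polynomial.X =
      -(Polynomial.X - Polynomial.C 1) := by rw [Polynomial.C_1]; ring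
  rw [heq]
  exact hp.neg

lemma psm_insert_left {n : ℕ} {i : Fin n} {σ τ : Finset (Fin n)} (hi : i ∉ σ) :
    psm (insert i σ) τ = X i * psm σ τ := by
  rw [psm, psm, Finset.prod_insert hi, mul_assoc]

lemma psm_insert_right {n : ℕ} {j : Fin n} {σ τ : Finset (Fin n)} (hj : j ∉ τ) :
    psm σ (insert j τ) = (1 - X j) * psm σ τ := by
  rw [psm, psm, Finset.prod_insert hj]; ring

lemma dvd_step {n : ℕ} {q p h : MvPolynomial (Fin n) (ZMod 2)} (hq : Prime q)
    (hdvd : h ∣ q * p) : (∃ h₁, h = q * h₁ ∧ h₁ ∣ p) ∨ h ∣ p := by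
  obtain ⟨k, hk⟩ := hdvd
  rcases hq.2.2 h k ⟨p, hk.symm⟩ with hqh | hqk
  · obtain ⟨h₁, rfl⟩ := hqh
    left
    refine ⟨h₁, rfl, k, ?_⟩
    have h2 := hk
    rw [mul_assoc] at h2
    exact mul_left_cancel₀ hq.ne_zero h2
  · obtain ⟨k₁, rfl⟩ := hqk
    right
    refine ⟨k₁, ?_⟩
    have h2 : q * p = q * (h * k₁) := by rw [hk]; ring
    exact mul_left_cancel₀ hq.ne_zero h2

lemma dvd_psm_empty {n : ℕ} : ∀ (τ : Finset (Fin n)) (h : MvPolynomial (Fin n) (ZMod 2)),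
    h ∣ psm ∅ τ → ∃ τ', τ' ⊆ τ ∧ h = psm ∅ τ' := by
  intro τ
  induction τ using Finset.induction_on with
  | empty =>
    intro h hdvd
    have h1 : h ∣ 1 := by simpa [psm] using hdvd
    exact ⟨∅, subset_rfl, by simpa [psm] using mv_isUnit_eq_one h (isUnit_of_dvd_one h1)⟩
  | @insert j τ₀ hj ih =>
    intro h hdvd
    rw [psm_insert_right hj] at hdvd
    rcases dvd_step (mv_prime_one_sub_X j) hdvd with ⟨h₁, rfl, hh₁⟩ | hh
    · obtain ⟨τ', hsub, rfl⟩ := ih h₁ hh₁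
      have hj' : j ∉ τ' := fun hmem => hj (hsub hmem)
      exact ⟨insert j τ', Finset.insert_subset_insert j hsub, (psm_insert_right hj').symm⟩
    · obtain ⟨τ', hsub, rfl⟩ := ih h hh
      exact ⟨τ', hsub.trans (Finset.subset_insert j τ₀), rfl⟩

lemma dvd_psm_classify {n : ℕ} : ∀ (σ τ : Finset (Fin n)) (h : MvPolynomial (Fin n) (ZMod 2)),
    h ∣ psm σ τ → ∃ σ' τ', σ' ⊆ σ ∧ τ' ⊆ τ ∧ h = psm σ' τ' := by
  intro σ
  induction σ using Finset.induction_on with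
  | empty =>
    intro τ h hdvd
    obtain ⟨τ', hsub, rfl⟩ := dvd_psm_empty τ h hdvd
    exact ⟨∅, τ', subset_rfl, hsub, rfl⟩
  | @insert i σ₀ hi ih =>
    intro τ h hdvd
    rw [psm_insert_left hi] at hdvd
    rcases dvd_step (mv_prime_X i) hdvd with ⟨h₁, rfl, hh₁⟩ | hh
    · obtain ⟨σ', τ', hs, ht, rfl⟩ := ih τ h₁ hh₁
      have hi' : i ∉ σ' := fun hmem => hi (hs hmem)
      exact ⟨insert i σ', τ', Finset.insert_subset_insert i hs, ht,
        (psm_insert_left hi').symm⟩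
    · obtain ⟨σ', τ', hs, ht, rfl⟩ := ih τ h hh
      exact ⟨σ', τ', hs.trans (Finset.subset_insert i σ₀), ht, rfl⟩

lemma exists_minimal_aux {n : ℕ} (I : Ideal (MvPolynomial (Fin n) (ZMod 2))) :
    ∀ (k : ℕ) (σ τ : Finset (Fin n)), σ.card + τ.card ≤ k → Disjoint σ τ → psm σ τ ∈ I →
    ∃ σ' τ', σ' ⊆ σ ∧ τ' ⊆ τ ∧ Disjoint σ' τ' ∧ IsMinimalPseudomonomial I (psm σ' τ') := by
  intro k
  induction k with
  | zero =>
    intro σ τ hcard hd hf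
    have hσ : σ = ∅ := Finset.card_eq_zero.mp (by omega)
    have hτ : τ = ∅ := Finset.card_eq_zero.mp (by omega)
    subst hσ; subst hτ
    refine ⟨∅, ∅, subset_rfl, subset_rfl, Finset.disjoint_empty_left _,
      ⟨⟨∅, ∅, Finset.disjoint_empty_left _, rfl⟩, hf, ?_⟩⟩
    intro g hg hng _
    apply hng
    have h1 : g ∣ 1 := by simpa [psm] using hg
    have h2 : g = psm ∅ ∅ := by simpa [psm] using mv_isUnit_eq_one g (isUnit_of_dvd_one h1)
    rw [h2]
  | succ k ih =>
    intro σ τ hcard hd hf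
    by_cases hmin : IsMinimalPseudomonomial I (psm σ τ)
    · exact ⟨σ, τ, subset_rfl, subset_rfl, hd, hmin⟩
    · obtain ⟨g, hg1, hg2, hg3⟩ : ∃ g, g ∣ psm σ τ ∧ ¬ psm σ τ ∣ g ∧ g ∈ I := by
        by_contra hcon
        push_neg at hcon
        exact hmin ⟨⟨σ, τ, hd, rfl⟩, hf, fun g a b => hcon g a b⟩
      obtain ⟨σ'', τ'', hs, ht, rfl⟩ := dvd_psm_classify σ τ g hg1
      have hne : ¬(σ'' = σ ∧ τ'' = τ) := by
        rintro ⟨rfl, rfl⟩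
        exact hg2 dvd_rfl
      have hlt : σ''.card + τ''.card < σ.card + τ.card := by
        have hc1 : σ''.card ≤ σ.card := Finset.card_le_card hs
        have hc2 : τ''.card ≤ τ.card := Finset.card_le_card ht
        rcases lt_or_eq_of_le hc1 with h | h
        · omega
        rcases lt_or_eq_of_le hc2 with h' | h'
        · omega
        exact absurd ⟨Finset.eq_of_subset_of_card_le hs h.ge,
          Finset.eq_of_subset_of_card_le ht h'.ge⟩ hne
      obtain ⟨σ', τ', h1, h2, h3, h4⟩ := ih σ'' τ'' (by omega) (hd.mono hs ht) hg3
      exact ⟨σ', τ', h1.trans hs, h2.trans ht, h3, h4⟩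

lemma polz_mem_span_iff {n : ℕ} (W : Set (Fin n ⊕ Fin n)) (σ τ : Finset (Fin n)) :
    polz σ τ ∈ Ideal.span (X '' W : Set (MvPolynomial (Fin n ⊕ Fin n) (ZMod 2))) ↔
      (∃ i ∈ σ, Sum.inl i ∈ W) ∨ ∃ j ∈ τ, Sum.inr j ∈ W := by
  classical
  constructor
  · intro h
    by_contra hno
    push_neg at hno
    obtain ⟨h1, h2⟩ := hno
    have hker : Ideal.span (X '' W : Set (MvPolynomial (Fin n ⊕ Fin n) (ZMod 2))) ≤
        RingHom.ker (eval (fun v => if v ∈ W then (0 : ZMod 2) else 1)) := by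
      rw [Ideal.span_le]
      rintro _ ⟨v, hv, rfl⟩
      simp [RingHom.mem_ker, hv]
    have h0 := hker h
    rw [RingHom.mem_ker] at h0
    rw [polz] at h0
    simp only [map_mul, map_prod, eval_X] at h0
    rw [Finset.prod_eq_one (fun i hi => if_neg (h1 i hi)),
      Finset.prod_eq_one (fun j hj => if_neg (h2 j hj)), one_mul] at h0
    exact one_ne_zero h0
  · rintro (⟨i, hi, hiW⟩ | ⟨j, hj, hjW⟩)
    · have hX : (X (Sum.inl i) : MvPolynomial (Fin n ⊕ Fin n) (ZMod 2)) ∈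
          Ideal.span (X '' W) := Ideal.subset_span ⟨Sum.inl i, hiW, rfl⟩
      have heq : polz σ τ = X (Sum.inl i) *
          ((∏ a ∈ σ.erase i, X (Sum.inl a)) * ∏ j ∈ τ, X (Sum.inr j)) := by
        rw [polz, ← Finset.mul_prod_erase σ _ hi, mul_assoc]
      rw [heq]
      exact Ideal.mul_mem_right _ _ hX
    · have hX : (X (Sum.inr j) : MvPolynomial (Fin n ⊕ Fin n) (ZMod 2)) ∈
          Ideal.span (X '' W) := Ideal.subset_span ⟨Sum.inr j, hjW, rfl⟩
      have heq : polz σ τ = X (Sum.inr j) *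
          ((∏ i ∈ σ, X (Sum.inl i)) * ∏ a ∈ τ.erase j, X (Sum.inr a)) := by
        rw [polz, ← Finset.mul_prod_erase τ _ hj]; ring
      rw [heq]
      exact Ideal.mul_mem_right _ _ hX

end Aux

theorem polar_ideal_le_monomial_prime_iff {n : ℕ} (C : Set (Fin n → ZMod 2))
    (W : Set (Fin n ⊕ Fin n)) :
    -- `b(W)` is the set of indices `i` with both `x_i ∈ W` and `y_i ∈ W`;
    -- the quotient code `C / b(W)` consists of restrictions of codewords of `C`
    -- to the coordinates outside `b(W)`;
    -- `V_W` is the interval of points of `{0,1}^{[n]∖b(W)}` which are `0` on `x(W)`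
    -- and `1` on `y(W)`.
    polarNeuralIdeal C ≤ Ideal.span (MvPolynomial.X '' W) ↔
      {c : {i : Fin n // ¬(Sum.inl i ∈ W ∧ Sum.inr i ∈ W)} → ZMod 2 |
          ∀ i, (Sum.inl i.1 ∈ W → c i = 0) ∧ (Sum.inr i.1 ∈ W → c i = 1)} ⊆
        (fun (c : Fin n → ZMod 2) (i : {i : Fin n // ¬(Sum.inl i ∈ W ∧ Sum.inr i ∈ W)}) =>
          c i.1) '' C := by
  classical
  constructor
  · -- P(J_C) ≤ q_W → V_W ⊆ C / b(W)
    intro hP v hv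
    by_contra hnc
    set v' : Fin n → ZMod 2 := fun i =>
      if h : ¬(Sum.inl i ∈ W ∧ Sum.inr i ∈ W) then v ⟨i, h⟩ else 0 with hv'
    set σ : Finset (Fin n) := Finset.univ.filter
      (fun i => ¬(Sum.inl i ∈ W ∧ Sum.inr i ∈ W) ∧ v' i = 1) with hσ
    set τ : Finset (Fin n) := Finset.univ.filter
      (fun i => ¬(Sum.inl i ∈ W ∧ Sum.inr i ∈ W) ∧ v' i = 0) with hτ
    have hd : Disjoint σ τ := by
      rw [Finset.disjoint_left]
      intro a ha ha'
      rw [hσ, Finset.mem_filter] at ha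
      rw [hτ, Finset.mem_filter] at ha'
      rw [ha.2.2] at ha'
      exact one_ne_zero ha'.2.2
    have hvan : ∀ c ∈ C, eval c (psm σ τ) = 0 := by
      intro c hc
      by_contra h0
      obtain ⟨h1, h2⟩ := eval_psm_ne_zero h0
      apply hnc
      refine ⟨c, hc, ?_⟩
      funext i
      obtain ⟨i0, hi0⟩ := i
      show c i0 = v ⟨i0, hi0⟩
      have hvv : v' i0 = v ⟨i0, hi0⟩ := dif_pos hi0
      rcases zmod2_cases (v' i0) with h | h
      · have hmem : i0 ∈ τ := by
          rw [hτ, Finset.mem_filter]; exact ⟨Finset.mem_univ _, hi0, h⟩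
        rw [h2 i0 hmem, ← hvv, h]
      · have hmem : i0 ∈ σ := by
          rw [hσ, Finset.mem_filter]; exact ⟨Finset.mem_univ _, hi0, h⟩
        rw [h1 i0 hmem, ← hvv, h]
    have hfI : psm σ τ ∈ neuralIdeal C := psm_mem_neuralIdeal hd hvan
    obtain ⟨σ', τ', hs, ht, hd', hmin⟩ :=
      exists_minimal_aux (neuralIdeal C) (σ.card + τ.card) σ τ le_rfl hd hfI
    have hpol : polz σ' τ' ∈ polarNeuralIdeal C :=
      Ideal.subset_span ⟨σ', τ', hd', hmin, rfl⟩
    rcases (polz_mem_span_iff W σ' τ').mp (hP hpol) with ⟨i, hi, hiW⟩ | ⟨j, hj, hjW⟩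
    · have hiσ := hs hi
      rw [hσ, Finset.mem_filter] at hiσ
      obtain ⟨-, hnb, h1'⟩ := hiσ
      have hz := (hv ⟨i, hnb⟩).1 hiW
      have hvv : v' i = v ⟨i, hnb⟩ := dif_pos hnb
      rw [hvv, hz] at h1'
      exact zero_ne_one h1'
    · have hjτ := ht hj
      rw [hτ, Finset.mem_filter] at hjτ
      obtain ⟨-, hnb, h0'⟩ := hjτ
      have hz := (hv ⟨j, hnb⟩).2 hjW
      have hvv : v' j = v ⟨j, hnb⟩ := dif_pos hnb
      rw [hvv, hz] at h0'
      exact one_ne_zero h0'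
  · -- V_W ⊆ C / b(W) → P(J_C) ≤ q_W
    intro hV
    rw [polarNeuralIdeal, Ideal.span_le]
    rintro _ ⟨σ, τ, hd, hmin, rfl⟩
    rw [SetLike.mem_coe, polz_mem_span_iff]
    by_contra hno
    push_neg at hno
    obtain ⟨h1, h2⟩ := hno
    set v : {i : Fin n // ¬(Sum.inl i ∈ W ∧ Sum.inr i ∈ W)} → ZMod 2 :=
      fun i => if i.1 ∈ σ then 1 else if Sum.inr i.1 ∈ W then 1 else 0 with hvdef
    have hvV : v ∈ {c : {i : Fin n // ¬(Sum.inl i ∈ W ∧ Sum.inr i ∈ W)} → ZMod 2 |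
        ∀ i, (Sum.inl i.1 ∈ W → c i = 0) ∧ (Sum.inr i.1 ∈ W → c i = 1)} := by
      intro i
      constructor
      · intro hinl
        have hiσ : i.1 ∉ σ := fun h => h1 i.1 h hinl
        have hinr : Sum.inr i.1 ∉ W := fun h => i.2 ⟨hinl, h⟩
        simp [hvdef, hiσ, hinr]
      · intro hinr
        by_cases hiσ : i.1 ∈ σ <;> simp [hvdef, hiσ, hinr]
    obtain ⟨c, hc, hrestrict⟩ := hV hvV
    have heval : eval c (psm σ τ) = 1 := by
      apply eval_psm_eq_one
      · intro i hi
        have hnb : ¬(Sum.inl i ∈ W ∧ Sum.inr i ∈ W) := fun h => h1 i hi h.1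
        have hci : c i = v ⟨i, hnb⟩ := congrFun hrestrict ⟨i, hnb⟩
        rw [hci, hvdef]
        simp [hi]
      · intro j hj
        have hnb : ¬(Sum.inl j ∈ W ∧ Sum.inr j ∈ W) := fun h => h2 j hj h.2
        have hcj : c j = v ⟨j, hnb⟩ := congrFun hrestrict ⟨j, hnb⟩
        have hjσ : j ∉ σ := Finset.disjoint_right.mp hd hj
        have hjr : Sum.inr j ∉ W := h2 j hj
        rw [hcj, hvdef]
        simp [hjσ, hjr]
    rw [eval_eq_zero_of_mem_neuralIdeal hmin.2.1 hc] at heval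
    exact zero_ne_one heval
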